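/- (Andreief identity.) Let (X, μ) be a σ-finite measure space and let f_1, …, f_N and g_1, …, g_N be complex-valued functions in L²(μ). Then det( ∫_X f_j(x) g_k(x) dμ(x) )_{j,k=1}^{N} = (1/N!) ∫_{X^N} det( f_j(x_k) )_{j,k=1}^{N} · det( g_j(x_k) )_{j,k=1}^{N} dμ(x_1)⋯dμ(x_N). -/

import Mathlib

open MeasureTheory

open Equiv in
/-- The purely algebraic half of the Andreief identity. -/
lemma andreief_sum {N : ℕ} (A : Matrix (Fin N) (Fin N) ℂ) :
    (∑ p : Perm (Fin N) × Perm (Fin N),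
        (((Perm.sign p.1 : ℤ) : ℂ) * ((Perm.sign p.2 : ℤ) : ℂ)) *
          ∏ k, A (p.1 k) (p.2 k)) = (N.factorial : ℂ) * A.det := by
  rw [Fintype.sum_prod_type]
  have hσ : ∀ σ : Perm (Fin N),
      (∑ τ : Perm (Fin N), (((Perm.sign σ : ℤ) : ℂ) * ((Perm.sign τ : ℤ) : ℂ)) *
        ∏ k, A (σ k) (τ k)) = A.det := by
    intro σ
    rw [← Equiv.sum_comp (Equiv.mulRight σ)]
    have hsq : ((Perm.sign σ : ℤ) : ℂ) * ((Perm.sign σ : ℤ) : ℂ) = 1 := by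
      have := Int.units_mul_self (Perm.sign σ)
      have : ((Perm.sign σ * Perm.sign σ : ℤˣ) : ℤ) = 1 := by rw [this]; rfl
      push_cast at this
      exact_mod_cast this
    have hterm : ∀ ρ : Perm (Fin N),
        (((Perm.sign σ : ℤ) : ℂ) * ((Perm.sign (Equiv.mulRight σ ρ) : ℤ) : ℂ)) *
          ∏ k, A (σ k) ((Equiv.mulRight σ ρ) k)
        = ((Perm.sign ρ : ℤ) : ℂ) * ∏ k, A k (ρ k) := by
      intro ρ
      have h1 : Perm.sign (Equiv.mulRight σ ρ) = Perm.sign ρ * Perm.sign σ := by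
        simp [Equiv.mulRight, map_mul]
      have h2 : (∏ k, A (σ k) ((Equiv.mulRight σ ρ) k)) = ∏ k, A k (ρ k) := by
        have := Equiv.prod_comp σ (fun k => A k (ρ k))
        simpa [Equiv.mulRight, Perm.mul_apply] using this
      rw [h1, h2]
      push_cast
      linear_combination (((Perm.sign ρ : ℤ) : ℂ) * ∏ k, A k (ρ k)) * hsq
    calc (∑ ρ : Perm (Fin N), (((Perm.sign σ : ℤ) : ℂ) *
            ((Perm.sign (Equiv.mulRight σ ρ) : ℤ) : ℂ)) *
            ∏ k, A (σ k) ((Equiv.mulRight σ ρ) k))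
        = ∑ ρ : Perm (Fin N), ((Perm.sign ρ : ℤ) : ℂ) * ∏ k, A k (ρ k) :=
          Finset.sum_congr rfl (fun ρ _ => hterm ρ)
      _ = A.det := by
          rw [← Matrix.det_transpose A, Matrix.det_apply']
          rfl
  rw [Finset.sum_congr rfl (fun σ _ => hσ σ), Finset.sum_const, Finset.card_univ,
    Fintype.card_perm, Fintype.card_fin, nsmul_eq_mul]

theorem andreief_identity
    {X : Type*} [MeasurableSpace X] (μ : Measure X) [SigmaFinite μ]
    (N : ℕ) (f g : Fin N → X → ℂ)
    (hf : ∀ j, MemLp (f j) 2 μ) (hg : ∀ j, MemLp (g j) 2 μ) :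
    Matrix.det (Matrix.of fun j k : Fin N => ∫ x, f j x * g k x ∂μ) =
      (1 / (N.factorial : ℂ)) *
        ∫ x : Fin N → X,
          Matrix.det (Matrix.of fun j k : Fin N => f j (x k)) *
            Matrix.det (Matrix.of fun j k : Fin N => g j (x k))
          ∂(Measure.pi fun _ => μ) := by
  classical
  letI : MeasureSpace X := ⟨μ⟩
  set A : Matrix (Fin N) (Fin N) ℂ := Matrix.of fun j k => ∫ x, f j x * g k x ∂μ with hA
  have hint : ∀ j k : Fin N, Integrable (fun x => f j x * g k x) μ := by
    intro j k
    have h := MemLp.smul (p := 2) (q := 2) (r := 1) (hg k) (hf j) (hpqr := ⟨by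
      rw [ENNReal.inv_two_add_inv_two, inv_one]⟩)
    rw [← memLp_one_iff_integrable]
    exact h
  -- per-pair integrand
  set F : Equiv.Perm (Fin N) × Equiv.Perm (Fin N) → (Fin N → X) → ℂ :=
    fun p x => ∏ k, (f (p.1 k) (x k) * g (p.2 k) (x k)) with hF
  set c : Equiv.Perm (Fin N) × Equiv.Perm (Fin N) → ℂ :=
    fun p => ((Equiv.Perm.sign p.1 : ℤ) : ℂ) * ((Equiv.Perm.sign p.2 : ℤ) : ℂ) with hc
  have hFint : ∀ p, Integrable (F p) (Measure.pi fun _ : Fin N => μ) := by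
    intro p
    exact Integrable.fintype_prod (f := fun k y => f (p.1 k) y * g (p.2 k) y)
      (fun k => hint (p.1 k) (p.2 k))
  have hexp : ∀ x : Fin N → X,
      Matrix.det (Matrix.of fun j k : Fin N => f j (x k)) *
        Matrix.det (Matrix.of fun j k : Fin N => g j (x k))
      = ∑ p : Equiv.Perm (Fin N) × Equiv.Perm (Fin N), c p * F p x := by
    intro x
    rw [Matrix.det_apply', Matrix.det_apply', Finset.sum_mul_sum, Fintype.sum_prod_type]
    refine Finset.sum_congr rfl (fun σ _ => Finset.sum_congr rfl (fun τ _ => ?_))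
    simp only [hc, hF, Matrix.of_apply, Finset.prod_mul_distrib]
    ring
  have hI : (∫ x : Fin N → X,
      Matrix.det (Matrix.of fun j k : Fin N => f j (x k)) *
        Matrix.det (Matrix.of fun j k : Fin N => g j (x k))
      ∂(Measure.pi fun _ => μ)) = (N.factorial : ℂ) * A.det := by
    calc (∫ x : Fin N → X,
          Matrix.det (Matrix.of fun j k : Fin N => f j (x k)) *
            Matrix.det (Matrix.of fun j k : Fin N => g j (x k))
          ∂(Measure.pi fun _ => μ))
        = ∫ x : Fin N → X, (∑ p, c p * F p x) ∂(Measure.pi fun _ => μ) := by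
          exact integral_congr_ae (Filter.Eventually.of_forall hexp)
      _ = ∑ p, ∫ x : Fin N → X, c p * F p x ∂(Measure.pi fun _ => μ) := by
          exact integral_finset_sum _ (fun p _ => (hFint p).const_mul (c p))
      _ = ∑ p, c p * ∫ x : Fin N → X, F p x ∂(Measure.pi fun _ => μ) := by
          exact Finset.sum_congr rfl (fun p _ => integral_const_mul _ _)
      _ = ∑ p : Equiv.Perm (Fin N) × Equiv.Perm (Fin N),
            c p * ∏ k, A (p.1 k) (p.2 k) := by
          refine Finset.sum_congr rfl (fun p _ => ?_)
          congr 1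
          exact integral_fintype_prod_eq_prod
            (fun k y => f (p.1 k) y * g (p.2 k) y)
      _ = (N.factorial : ℂ) * A.det := andreief_sum A
  rw [hI, ← mul_assoc, one_div, inv_mul_cancel₀ (by
    exact_mod_cast Nat.factorial_ne_zero N), one_mul]
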